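/- Let (W,S) be a Coxeter system, let 𝓘 ⊆ W be an ideal of W with respect to the left weak order, let K ⊆ S, and let d be a minimal length right coset representative of W_K (i.e. d ∈ D_K⁻¹) with d ∈ 𝓘. Then the set 𝓘_d = {v ∈ W_K : vd ∈ 𝓘} is an ideal of W_K with respect to the left weak order on W_K. -/

import Mathlib

namespace CoxAux

open List CoxeterSystem

variable {B W : Type*} [Group W] [DecidableEq W] {M : CoxeterMatrix B} (cs : CoxeterSystem M W)

local prefix:100 "σ" => cs.simple
local prefix:100 "π" => cs.wordProd
local prefix:100 "ℓ" => cs.length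

def sf (i : B) : W × ZMod 2 → W × ZMod 2 :=
  fun p => (σ i * p.1 * σ i, p.2 + if p.1 = σ i then 1 else 0)

lemma conj_eq_iff (u x y : W) : u * x * u⁻¹ = y ↔ x = u⁻¹ * y * u := by
  constructor
  · intro h; rw [← h]; group
  · intro h; rw [h]; group

lemma simple_conj_eq_iff (i : B) (t y : W) : σ i * t * σ i = y ↔ t = σ i * y * σ i := by
  have h := conj_eq_iff (σ i) t y
  rwa [cs.inv_simple] at h

lemma sf_invol (i : B) : Function.Involutive (sf cs i) := by
  rintro ⟨t, e⟩
  have hz : ∀ x : ZMod 2, x + x = 0 := by decide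
  simp only [sf, simple_conj_eq_iff]
  refine Prod.ext ?_ ?_
  · simp only
    calc σ i * (σ i * t * σ i) * σ i = (σ i * σ i) * t * (σ i * σ i) := by group
    _ = t := by rw [cs.simple_mul_simple_self]; group
  · simp only
    have hiff : (t = σ i * σ i * σ i) ↔ (t = σ i) := by
      rw [cs.simple_mul_simple_self, one_mul]
    rw [if_congr hiff rfl rfl]
    by_cases h : t = σ i <;> simp [h, add_assoc, hz]

def sp (i : B) : Equiv.Perm (W × ZMod 2) := (sf_invol cs i).toPerm

lemma sp_apply (i : B) (p : W × ZMod 2) : sp cs i p = sf cs i p := rfl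

lemma sp_liftable : M.IsLiftable (sp cs) := by
  intro i j
  set m := M i j with hm
  set a : W := σ i * σ j with ha
  set r : W := σ j with hr
  have ham : a ^ m = 1 := cs.simple_mul_simple_pow i j
  have hainvr : a⁻¹ * r = r * a := by
    rw [ha, hr, mul_inv_rev, cs.inv_simple, cs.inv_simple]
    calc σ j * σ i * σ j = σ j * (σ i * σ j) := by group
    _ = _ := rfl
  have conj : ∀ k : ℕ, (a ^ k)⁻¹ * r * a ^ k = r * a ^ (2 * k) := by
    intro k
    induction k with
    | zero => simp
    | succ k ih =>
      calc (a ^ (k+1))⁻¹ * r * a ^ (k+1)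
          = a⁻¹ * ((a ^ k)⁻¹ * r * a ^ k) * a := by rw [pow_succ, mul_inv_rev]; group
        _ = a⁻¹ * (r * a ^ (2*k)) * a := by rw [ih]
        _ = (a⁻¹ * r) * a ^ (2*k) * a := by group
        _ = (r * a) * a ^ (2*k) * a := by rw [hainvr]
        _ = r * a ^ (2*(k+1)) := by group
  have conj' : ∀ k : ℕ, (a ^ k)⁻¹ * (r * a) * a ^ k = r * a ^ (2 * k + 1) := by
    intro k
    calc (a ^ k)⁻¹ * (r * a) * a ^ k
        = ((a ^ k)⁻¹ * r * a ^ k) * ((a ^ k)⁻¹ * a * a ^ k) := by group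
      _ = (r * a ^ (2*k)) * ((a ^ k)⁻¹ * a * a ^ k) := by rw [conj k]
      _ = r * a ^ (2*k+1) := by group
  have gform : ∀ t : W, ∀ e : ZMod 2, (sf cs i ∘ sf cs j) (t, e) =
      (a * t * a⁻¹, e + ((if t = r then 1 else 0) + (if t = r * a then 1 else 0))) := by
    intro t e
    simp only [Function.comp, sf]
    refine Prod.ext ?_ ?_
    · simp only
      rw [ha, hr, mul_inv_rev, cs.inv_simple, cs.inv_simple]
      group
    · simp only
      have hiff : (σ j * t * σ j = σ i) ↔ (t = r * a) := by
        rw [simple_conj_eq_iff]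
        rw [hr, ha, hr]
        constructor
        · intro h; rw [h]; group
        · intro h; rw [h]; group
      simp only [hiff]
      have hiff2 : (t = σ j) ↔ (t = r) := by rw [hr]
      simp only [hiff2]
      ring
  have iterform : ∀ k : ℕ, ∀ t : W, ∀ e : ZMod 2,
      (sf cs i ∘ sf cs j)^[k] (t, e) =
        (a ^ k * t * (a ^ k)⁻¹,
          e + ∑ l ∈ Finset.range (2 * k), (if t = r * a ^ l then 1 else 0)) := by
    intro k
    induction k with
    | zero => intro t e; simp
    | succ k ih =>
      intro t e
      rw [Function.iterate_succ_apply', ih t e, gform]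
      refine Prod.ext ?_ ?_
      · simp only
        group
      · simp only
        have h1 : (a ^ k * t * (a ^ k)⁻¹ = r) ↔ (t = r * a ^ (2 * k)) := by
          rw [conj_eq_iff, conj k]
        have h2 : (a ^ k * t * (a ^ k)⁻¹ = r * a) ↔ (t = r * a ^ (2 * k + 1)) := by
          rw [conj_eq_iff, conj' k]
        rw [if_congr h1 rfl rfl, if_congr h2 rfl rfl]
        have : 2 * (k + 1) = (2 * k + 1) + 1 := by ring
        rw [this, Finset.sum_range_succ, Finset.sum_range_succ]
        ring
  have hcoe : ⇑((sp cs i * sp cs j) ^ m) = (sf cs i ∘ sf cs j)^[m] := by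
    rw [Equiv.Perm.coe_pow]
    congr 1
  apply Equiv.ext
  rintro ⟨t, e⟩
  have := congrFun hcoe (t, e)
  rw [this, iterform m t e, ham]
  have hsum : ∑ l ∈ Finset.range (2 * m), (if t = r * a ^ l then (1 : ZMod 2) else 0) = 0 := by
    have h2m : 2 * m = m + m := by ring
    rw [h2m, Finset.sum_range_add]
    have : ∀ x : ℕ, (if t = r * a ^ (m + x) then (1 : ZMod 2) else 0)
        = (if t = r * a ^ x then (1 : ZMod 2) else 0) := by
      intro x
      have : a ^ (m + x) = a ^ x := by rw [pow_add, ham, one_mul]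
      rw [this]
    rw [Finset.sum_congr rfl (fun x _ => this x)]
    have hz : ∀ x : ZMod 2, x + x = 0 := by decide
    exact hz _
  rw [hsum]
  simp
def phi : W →* Equiv.Perm (W × ZMod 2) := cs.lift ⟨sp cs, sp_liftable cs⟩

lemma phi_simple (i : B) : phi cs (σ i) = sp cs i := cs.lift_apply_simple (sp_liftable cs) i

lemma phi_wordProd (ω : List B) (t : W) (e : ZMod 2) :
    phi cs (π ω) (t, e) = (π ω * t * (π ω)⁻¹, e + ((cs.rightInvSeq ω).count t : ZMod 2)) := by
  induction ω with
  | nil => simp [cs.wordProd_nil]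
  | cons i ω ih =>
    rw [cs.wordProd_cons, map_mul, Equiv.Perm.mul_apply, ih, phi_simple, sp_apply]
    have hris : cs.rightInvSeq (i :: ω) = ((π ω)⁻¹ * σ i * π ω) :: cs.rightInvSeq ω := rfl
    rw [hris]
    simp only [sf]
    refine Prod.ext ?_ ?_
    · simp only
      rw [mul_inv_rev, cs.inv_simple]
      group
    · simp only
      have hiff : (π ω * t * (π ω)⁻¹ = σ i) ↔ (t = (π ω)⁻¹ * σ i * π ω) :=
        conj_eq_iff (π ω) t (σ i)
    -- count over cons
      rw [List.count_cons, if_congr hiff rfl rfl]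
      push_cast
      by_cases h : t = (π ω)⁻¹ * σ i * π ω
      · rw [if_pos h, if_pos (by exact beq_iff_eq.mpr h.symm)]
        ring
      · rw [if_neg h, if_neg (by simp only [beq_iff_eq]; exact fun hh => h hh.symm)]
        ring

def eta (w t : W) : ZMod 2 := (phi cs w (t, 0)).2

lemma phi_apply (w t : W) (e : ZMod 2) :
    phi cs w (t, e) = (w * t * w⁻¹, e + eta cs w t) := by
  obtain ⟨ω, rfl⟩ := cs.wordProd_surjective w
  rw [phi_wordProd, eta, phi_wordProd]
  simp

lemma count_ris_eq (ω : List B) (t : W) :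
    ((cs.rightInvSeq ω).count t : ZMod 2) = eta cs (π ω) t := by
  rw [eta, phi_wordProd]
  simp

lemma eta_self {t : W} (ht : cs.IsReflection t) : eta cs t t = 1 := by
  obtain ⟨q, i, rfl⟩ := ht
  set t := q * σ i * q⁻¹ with hts
  have h0 : q⁻¹ * t * q = σ i := by rw [hts]; group
  set E : ZMod 2 := eta cs q⁻¹ t with hE
  have h1 : phi cs q⁻¹ (t, 0) = (σ i, E) := by
    rw [phi_apply]
    refine Prod.ext ?_ ?_
    · simp only
      rw [inv_inv, h0]
    · simp [hE]
  have h3 : phi cs q (phi cs q⁻¹ (t, 0)) = (t, 0) := by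
    rw [← Equiv.Perm.mul_apply, ← map_mul, mul_inv_cancel, map_one, Equiv.Perm.one_apply]
  rw [h1, phi_apply] at h3
  have h4 : E + eta cs q (σ i) = 0 := congrArg Prod.snd h3
  have h5 : phi cs (σ i) (σ i, E) = (σ i, E + 1) := by
    rw [phi_simple, sp_apply]
    simp only [sf]
    refine Prod.ext ?_ ?_
    · simp only
      rw [cs.simple_mul_simple_self, one_mul]
    · simp
  have hmul : phi cs t = phi cs q * phi cs (σ i) * phi cs q⁻¹ := by
    rw [hts, map_mul, map_mul]
  rw [eta, hmul]
  rw [Equiv.Perm.mul_apply, Equiv.Perm.mul_apply, h1, h5, phi_apply]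
  simp only
  have hq : q * σ i * q⁻¹ = t := hts.symm
  calc E + 1 + eta cs q (σ i) = (E + eta cs q (σ i)) + 1 := by ring
  _ = 1 := by rw [h4, zero_add]

lemma eta_mul_reflection (w t : W) (ht : cs.IsReflection t) :
    eta cs (w * t) t = eta cs w t + 1 := by
  have h1 : phi cs t (t, 0) = (t, 1) := by
    rw [phi_apply]
    have ht1 : t * t * t⁻¹ = t := by group
    rw [ht1, zero_add, eta_self cs ht]
  rw [eta, map_mul, Equiv.Perm.mul_apply, h1, phi_apply]
  exact add_comm 1 _

lemma mem_ris_of_eta_one {ω : List B} (hred : cs.IsReduced ω) {t : W}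
    (h : eta cs (π ω) t = 1) : t ∈ cs.rightInvSeq ω := by
  by_contra hmem
  have : (cs.rightInvSeq ω).count t = 0 := List.count_eq_zero_of_not_mem hmem
  have h2 := count_ris_eq cs ω t
  rw [this] at h2
  rw [← h2] at h
  simp at h

lemma exchange {ω : List B} (hred : cs.IsReduced ω) {t : W} (h : eta cs (π ω) t = 1) :
    ∃ j < ω.length, π ω * t = π (ω.eraseIdx j) := by
  have hmem := mem_ris_of_eta_one cs hred h
  obtain ⟨j, hj, hjt⟩ := List.mem_iff_getElem.mp hmem
  rw [cs.length_rightInvSeq] at hj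
  refine ⟨j, hj, ?_⟩
  have : (cs.rightInvSeq ω).getD j 1 = t := by
    rw [List.getD_eq_getElem _ 1 (by rwa [cs.length_rightInvSeq])]
    exact hjt
  rw [← this]
  exact cs.wordProd_mul_getD_rightInvSeq ω j

lemma length_lt_of_eta_one {w t : W} (h : eta cs w t = 1) : ℓ (w * t) < ℓ w := by
  obtain ⟨ω, hred, rfl⟩ := cs.exists_reduced_word' w
  obtain ⟨j, hj, hje⟩ := exchange cs hred h
  rw [hje]
  calc ℓ (π (ω.eraseIdx j)) ≤ (ω.eraseIdx j).length := cs.length_wordProd_le _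
  _ < ω.length := by rw [← List.length_eraseIdx_add_one hj]; omega
  _ = ℓ (π ω) := hred.symm

lemma eta_one_of_length_lt {w t : W} (ht : cs.IsReflection t) (h : ℓ (w * t) < ℓ w) :
    eta cs w t = 1 := by
  have hcases : ∀ x : ZMod 2, x = 0 ∨ x = 1 := by decide
  rcases hcases (eta cs w t) with h0 | h1
  · exfalso
    have h2 : eta cs (w * t) t = 1 := by
      rw [eta_mul_reflection cs _ _ ht, h0, zero_add]
    have h3 := length_lt_of_eta_one cs h2
    rw [mul_assoc, ht.mul_self, mul_one] at h3
    omega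
  · exact h1

theorem strong_exchange {ω : List B} (hred : cs.IsReduced ω) {t : W} (ht : cs.IsReflection t)
    (h : ℓ (π ω * t) < ℓ (π ω)) : ∃ j < ω.length, π ω * t = π (ω.eraseIdx j) :=
  exchange cs hred (eta_one_of_length_lt cs ht h)
lemma deletion {ω : List B} (h : ¬ cs.IsReduced ω) :
    ∃ j k, j < k ∧ k < ω.length ∧ π ω = π ((ω.eraseIdx k).eraseIdx j) := by
  classical
  have hnil : cs.IsReduced ([] : List B) := by
    unfold CoxeterSystem.IsReduced
    simp [cs.wordProd_nil]
  have hωne : ω ≠ [] := by rintro rfl; exact h hnil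
  have hlen : 0 < ω.length := List.length_pos_iff.mpr hωne
  have hex : ∃ n, ¬ cs.IsReduced (ω.take (n+1)) := by
    refine ⟨ω.length - 1, ?_⟩
    rw [show ω.length - 1 + 1 = ω.length by omega, List.take_length]
    exact h
  set k := Nat.find hex with hkdef
  have hk : ¬ cs.IsReduced (ω.take (k+1)) := Nat.find_spec hex
  have hmin : ∀ l, l < k → cs.IsReduced (ω.take (l+1)) := by
    intro l hl
    have := Nat.find_min hex hl
    tauto
  have hredk : cs.IsReduced (ω.take k) := by
    rcases Nat.eq_zero_or_pos k with h0 | hpos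
    · rw [h0]; simpa using hnil
    · have := hmin (k-1) (by omega)
      rwa [show k - 1 + 1 = k by omega] at this
  have hklt : k < ω.length := by
    by_contra hge
    push_neg at hge
    have h1 : ω.take (k+1) = ω := List.take_of_length_le (by omega)
    have h2 : ω.take k = ω := List.take_of_length_le hge
    rw [h1] at hk
    rw [h2] at hredk
    exact hk hredk
  have htake : ω.take (k+1) = ω.take k ++ [ω.get ⟨k, hklt⟩] := by
    rw [List.take_succ]
    simp [List.getElem?_eq_getElem hklt]
  set i := ω.get ⟨k, hklt⟩ with hi
  have hπtake : π (ω.take (k+1)) = π (ω.take k) * σ i := by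
    rw [htake, cs.wordProd_append, cs.wordProd_singleton]
  have hlentake : (ω.take k).length = k := by
    rw [List.length_take]; omega
  have hℓk : ℓ (π (ω.take k)) = k := by
    have := hredk
    unfold CoxeterSystem.IsReduced at this
    rw [this, hlentake]
  have hℓk1 : ℓ (π (ω.take k) * σ i) < ℓ (π (ω.take k)) := by
    rcases cs.length_mul_simple (π (ω.take k)) i with hcase | hcase
    · exfalso
      apply hk
      unfold CoxeterSystem.IsReduced
      rw [hπtake, hcase, hℓk, List.length_take]
      omega
    · omega
  obtain ⟨j, hj, hje⟩ := strong_exchange cs hredk (cs.isReflection_simple i) hℓk1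
  rw [hlentake] at hj
  refine ⟨j, k, hj, hklt, ?_⟩
  have hsplit : ω = ω.take (k+1) ++ ω.drop (k+1) := (List.take_append_drop _ _).symm
  have herase : (ω.eraseIdx k).eraseIdx j = (ω.take k).eraseIdx j ++ ω.drop (k+1) := by
    rw [show ω.eraseIdx k = ω.take k ++ ω.drop (k+1) from List.eraseIdx_eq_take_drop_succ ω k]
    exact List.eraseIdx_append_of_lt_length (by rw [hlentake]; omega) _
  calc π ω = π (ω.take (k+1)) * π (ω.drop (k+1)) := by
        nth_rw 1 [hsplit]; rw [cs.wordProd_append]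
  _ = (π (ω.take k) * σ i) * π (ω.drop (k+1)) := by rw [hπtake]
  _ = π ((ω.take k).eraseIdx j) * π (ω.drop (k+1)) := by rw [hje]
  _ = π ((ω.eraseIdx k).eraseIdx j) := by rw [herase, cs.wordProd_append]

lemma wordProd_mem_closure {K : Set B} {κ : List B} (hκ : ∀ x ∈ κ, x ∈ K) :
    π κ ∈ Subgroup.closure (cs.simple '' K) := by
  induction κ with
  | nil => rw [cs.wordProd_nil]; exact one_mem _
  | cons c κ' ih =>
    rw [cs.wordProd_cons]
    exact mul_mem (Subgroup.subset_closure ⟨c, hκ c (List.mem_cons_self), rfl⟩)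
      (ih (fun x hx => hκ x (List.mem_cons_of_mem c hx)))

lemma exists_word_in {K : Set B} {u : W} (hu : u ∈ Subgroup.closure (cs.simple '' K)) :
    ∃ κ : List B, (∀ x ∈ κ, x ∈ K) ∧ π κ = u := by
  induction hu using Subgroup.closure_induction with
  | mem x hx =>
    obtain ⟨c, hc, rfl⟩ := hx
    exact ⟨[c], by simpa using hc, cs.wordProd_singleton c⟩
  | one => exact ⟨[], by simp, cs.wordProd_nil⟩
  | mul x y hx hy ihx ihy =>
    obtain ⟨κ₁, h1, rfl⟩ := ihx
    obtain ⟨κ₂, h2, rfl⟩ := ihy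
    refine ⟨κ₁ ++ κ₂, ?_, cs.wordProd_append κ₁ κ₂⟩
    intro a ha
    rcases List.mem_append.mp ha with h | h
    · exact h1 a h
    · exact h2 a h
  | inv x hx ihx =>
    obtain ⟨κ, h1, rfl⟩ := ihx
    exact ⟨κ.reverse, fun a ha => h1 a (List.mem_reverse.mp ha), cs.wordProd_reverse κ⟩

lemma exists_reduced_word_in {K : Set B} {u : W} (hu : u ∈ Subgroup.closure (cs.simple '' K)) :
    ∃ κ : List B, cs.IsReduced κ ∧ (∀ x ∈ κ, x ∈ K) ∧ π κ = u := by
  obtain ⟨κ, hκ, rfl⟩ := exists_word_in cs hu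
  clear hu
  suffices H : ∀ (n : ℕ) (κ : List B), κ.length = n → (∀ x ∈ κ, x ∈ K) →
      ∃ κ' : List B, cs.IsReduced κ' ∧ (∀ x ∈ κ', x ∈ K) ∧ π κ' = π κ by
    exact H κ.length κ rfl hκ
  clear hκ κ
  intro n
  induction n using Nat.strong_induction_on with
  | _ n ih =>
  intro κ hn hκ
  by_cases hred : cs.IsReduced κ
  · exact ⟨κ, hred, hκ, rfl⟩
  · obtain ⟨j, k, hjk, hk, heq⟩ := deletion cs hred
    set κ' := (κ.eraseIdx k).eraseIdx j with hκ'
    have hsub : ∀ x ∈ κ', x ∈ K := by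
      intro x hx
      exact hκ x (List.eraseIdx_subset (List.eraseIdx_subset hx))
    have hlen : κ'.length < n := by
      have l1 : (κ.eraseIdx k).length + 1 = κ.length := List.length_eraseIdx_add_one hk
      have l2 : κ'.length + 1 = (κ.eraseIdx k).length := by
        apply List.length_eraseIdx_add_one
        omega
      omega
    obtain ⟨κ'', hred'', hK'', hprod''⟩ := ih κ'.length (by omega) κ' rfl hsub
    exact ⟨κ'', hred'', hK'', by rw [hprod'', ← heq]⟩
lemma length_mul_of_min {K : Set B} {d₀ : W}
    (hmin : ∀ u ∈ Subgroup.closure (cs.simple '' K), ℓ d₀ ≤ ℓ (u * d₀)) :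
    ∀ u ∈ Subgroup.closure (cs.simple '' K), ℓ (u * d₀) = ℓ u + ℓ d₀ := by
  intro u hu
  obtain ⟨κ, hκred, hκK, hκu⟩ := exists_reduced_word_in cs hu
  obtain ⟨δ, hδlen, hδd⟩ := cs.exists_reduced_word d₀
  replace hδlen : δ.length = ℓ d₀ := by rw [hδd]; exact hδlen.symm
  have hδle : ∀ m, m < δ.length → ((δ.eraseIdx m).length) + 1 = δ.length :=
    fun m hm => List.length_eraseIdx_add_one hm
  have hκlen : κ.length = ℓ u := by rw [← hκu]; exact hκred.symm
  have hle : ℓ (u * d₀) ≤ ℓ u + ℓ d₀ := cs.length_mul_le u d₀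
  by_contra hne
  have hlt : ℓ (u * d₀) < ℓ u + ℓ d₀ := lt_of_le_of_ne hle hne
  have hword : π (κ ++ δ) = u * d₀ := by rw [cs.wordProd_append, hκu, ← hδd]
  have hnotred : ¬ cs.IsReduced (κ ++ δ) := by
    unfold CoxeterSystem.IsReduced
    rw [hword, List.length_append]
    omega
  obtain ⟨j, k, hjk, hk, heq⟩ := deletion cs hnotred
  rw [hword] at heq
  rw [List.length_append] at hk
  by_cases hkκ : k < κ.length
  · -- both deletions inside κ
    have e1 : (κ ++ δ).eraseIdx k = κ.eraseIdx k ++ δ :=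
      List.eraseIdx_append_of_lt_length hkκ δ
    have hlen1 : (κ.eraseIdx k).length + 1 = κ.length := List.length_eraseIdx_add_one hkκ
    have e2 : (κ.eraseIdx k ++ δ).eraseIdx j = (κ.eraseIdx k).eraseIdx j ++ δ :=
      List.eraseIdx_append_of_lt_length (by omega) δ
    rw [e1, e2, cs.wordProd_append, ← hδd] at heq
    have hueq : u = π ((κ.eraseIdx k).eraseIdx j) := mul_right_cancel heq
    have hlen2 : ((κ.eraseIdx k).eraseIdx j).length + 1 = (κ.eraseIdx k).length :=
      List.length_eraseIdx_add_one (by omega)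
    have : ℓ u ≤ ((κ.eraseIdx k).eraseIdx j).length := hueq ▸ cs.length_wordProd_le _
    omega
  · push_neg at hkκ
    have e1 : (κ ++ δ).eraseIdx k = κ ++ δ.eraseIdx (k - κ.length) := by
      rw [List.eraseIdx_append_of_length_le hkκ]
    have hkδ : k - κ.length < δ.length := by omega
    have hlenδ' : (δ.eraseIdx (k - κ.length)).length + 1 = δ.length :=
      List.length_eraseIdx_add_one hkδ
    by_cases hjκ : j < κ.length
    · -- one deletion in each part
      have e2 : (κ ++ δ.eraseIdx (k - κ.length)).eraseIdx j
          = κ.eraseIdx j ++ δ.eraseIdx (k - κ.length) :=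
        List.eraseIdx_append_of_lt_length hjκ _
      rw [e1, e2, cs.wordProd_append] at heq
      set c := π (κ.eraseIdx j) with hc
      have hcmem : c ∈ Subgroup.closure (cs.simple '' K) :=
        wordProd_mem_closure cs (fun x hx => hκK x (List.eraseIdx_subset hx))
      have hδ'eq : π (δ.eraseIdx (k - κ.length)) = (c⁻¹ * u) * d₀ := by
        rw [mul_assoc, heq]
        group
      have hmem2 : c⁻¹ * u ∈ Subgroup.closure (cs.simple '' K) := mul_mem (inv_mem hcmem) hu
      have h1 := hmin (c⁻¹ * u) hmem2
      rw [← hδ'eq] at h1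
      have h2 : ℓ (π (δ.eraseIdx (k - κ.length))) ≤ (δ.eraseIdx (k - κ.length)).length :=
        cs.length_wordProd_le _
      omega
    · push_neg at hjκ
      have e2 : (κ ++ δ.eraseIdx (k - κ.length)).eraseIdx j
          = κ ++ (δ.eraseIdx (k - κ.length)).eraseIdx (j - κ.length) := by
        rw [List.eraseIdx_append_of_length_le hjκ]
      rw [e1, e2, cs.wordProd_append, hκu] at heq
      have hd₀eq : d₀ = π ((δ.eraseIdx (k - κ.length)).eraseIdx (j - κ.length)) :=
        mul_left_cancel heq
      have hlen2 : ((δ.eraseIdx (k - κ.length)).eraseIdx (j - κ.length)).length + 1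
          = (δ.eraseIdx (k - κ.length)).length :=
        List.length_eraseIdx_add_one (by omega)
      have : ℓ d₀ ≤ ((δ.eraseIdx (k - κ.length)).eraseIdx (j - κ.length)).length :=
        hd₀eq ▸ cs.length_wordProd_le _
      omega

lemma length_coset_rep {K : Set B} {d : W} (hd : ∀ i ∈ K, ℓ d < ℓ (σ i * d)) :
    ∀ u ∈ Subgroup.closure (cs.simple '' K), ℓ (u * d) = ℓ u + ℓ d := by
  classical
  set S : Set ℕ := {n | ∃ u ∈ Subgroup.closure (cs.simple '' K), ℓ (u * d) = n} with hS
  have hSne : S.Nonempty := ⟨ℓ ((1 : W) * d), 1, one_mem _, rfl⟩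
  obtain ⟨u₀, hu₀, hu₀l⟩ := Nat.sInf_mem hSne
  set d₀ := u₀ * d with hd₀
  have hmin : ∀ u ∈ Subgroup.closure (cs.simple '' K), ℓ d₀ ≤ ℓ (u * d₀) := by
    intro u hu
    have hmem : ℓ (u * d₀) ∈ S := ⟨u * u₀, mul_mem hu hu₀, by rw [mul_assoc]⟩
    have := Nat.sInf_le hmem
    omega
  have main := length_mul_of_min cs hmin
  set v := u₀⁻¹ with hv
  have hvmem : v ∈ Subgroup.closure (cs.simple '' K) := inv_mem hu₀
  have hvd : v * d₀ = d := by rw [hv, hd₀]; group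
  have hv1 : v = 1 := by
    by_contra hv1
    obtain ⟨κ, hκred, hκK, hκv⟩ := exists_reduced_word_in cs hvmem
    cases κ with
    | nil =>
      apply hv1
      rw [← hκv, cs.wordProd_nil]
    | cons c κ' =>
      have hcK : c ∈ K := hκK c (List.mem_cons_self)
      have h1 : σ c * v = π κ' := by
        rw [← hκv, cs.wordProd_cons, cs.simple_mul_simple_cancel_left]
      have h2 : π κ' ∈ Subgroup.closure (cs.simple '' K) :=
        wordProd_mem_closure cs (fun x hx => hκK x (List.mem_cons_of_mem c hx))
      have hκ'red : cs.IsReduced κ' := by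
        unfold CoxeterSystem.IsReduced
        have hub : ℓ (π κ') ≤ κ'.length := cs.length_wordProd_le κ'
        have hlb : ℓ (π (c :: κ')) ≤ 1 + ℓ (π κ') := by
          rw [cs.wordProd_cons]
          have := cs.length_mul_le (σ c) (π κ')
          rw [cs.length_simple] at this
          exact this
        have hfull : ℓ (π (c :: κ')) = κ'.length + 1 := by
          rw [hκred]; simp
        omega
      have h3 : ℓ (σ c * v) = κ'.length := by rw [h1]; exact hκ'red
      have h4 : ℓ v = κ'.length + 1 := by
        rw [← hκv, hκred]
        simp
      have h5 : σ c * d = (σ c * v) * d₀ := by rw [← hvd]; group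
      have h6 : ℓ (σ c * d) = ℓ (σ c * v) + ℓ d₀ := by
        rw [h5]
        exact main _ (h1 ▸ h2)
      have h7 : ℓ d = ℓ v + ℓ d₀ := by rw [← hvd]; exact main v hvmem
      have h8 := hd c hcK
      omega
  have hdd₀ : d = d₀ := by rw [← hvd, hv1, one_mul]
  intro u hu
  rw [hdd₀]
  exact main u hu

end CoxAux

section
variable {B W : Type*} [Group W] {M : CoxeterMatrix B} (cs : CoxeterSystem M W)

/-- The left weak order: `v ≤_L w` iff `l(w) = l(wv⁻¹) + l(v)`. -/
def leftWeakLE (v w : W) : Prop :=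
  cs.length w = cs.length (w * v⁻¹) + cs.length v

/-- If `𝓘` is an ideal of `(W, ≤_L)`, `K ⊆ S`, and `d ∈ D_K⁻¹ ∩ 𝓘`, then
`𝓘_d = {v ∈ W_K : vd ∈ 𝓘}` is an ideal of `W_K` with respect to the left weak order. -/
theorem restricted_ideal_is_ideal (𝓘 : Set W)
    (hIdeal : ∀ w ∈ 𝓘, ∀ v : W, leftWeakLE cs v w → v ∈ 𝓘)
    (K : Set B) (d : W)
    (hd : ∀ i ∈ K, cs.length (cs.simple i * d) > cs.length d)
    (hdI : d ∈ 𝓘) :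
    ∀ w ∈ (Subgroup.closure (cs.simple '' K) : Subgroup W), w * d ∈ 𝓘 →
      ∀ v ∈ (Subgroup.closure (cs.simple '' K) : Subgroup W), leftWeakLE cs v w →
        v * d ∈ 𝓘 := by
  classical
  intro w hw hwI v hv hvw
  have hkey := CoxAux.length_coset_rep cs (K := K) (fun i hi => hd i hi)
  apply hIdeal (w * d) hwI (v * d)
  unfold leftWeakLE at hvw ⊢
  have e1 : w * d * (v * d)⁻¹ = w * v⁻¹ := by group
  rw [e1, hkey w hw, hkey v hv]
  omega

end
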